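/- arXiv:1008.1498 — 2 statements merged into one kernel-verified Lean document; each statement's English description precedes it below -/
import Mathlib

section
/- Let A be an m×n matrix over ℚ with m ≥ n such that every square submatrix of A is nonsingular (for every k ≥ 1 and every row set R and column set C with |R| = |C| = k, the submatrix A(R,C) is invertible). Let B be the (m+n)×n matrix obtained by stacking the n×n identity matrix Iₙ on top of A. Then B is optimally sparse: for every invertible n×n matrix X over ℚ, nnz(BX) ≥ nnz(B) = n(m+1). -/
/-- Number of nonzero entries of a matrix. -/
def nnz {μ ν : Type*} [Fintype μ] [Fintype ν] [DecidableEq ℚ]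
    (A : Matrix μ ν ℚ) : ℕ :=
  Finset.card (Finset.univ.filter fun p : μ × ν => A p.1 p.2 ≠ 0)

open Finset Matrix

lemma nnz_eq_sum {μ ν : Type*} [Fintype μ] [Fintype ν] (M : Matrix μ ν ℚ) :
    nnz M = ∑ j : ν, (Finset.univ.filter fun i : μ => M i j ≠ 0).card := by
  unfold nnz
  rw [Finset.card_filter, Fintype.sum_prod_type, Finset.sum_comm]
  refine Finset.sum_congr rfl fun j _ => ?_
  rw [Finset.card_filter]

lemma zeros_lt (m n : ℕ) (A : Matrix (Fin m) (Fin n) ℚ)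
    (hsub : ∀ k : ℕ, 1 ≤ k → ∀ (r : Fin k → Fin m) (c : Fin k → Fin n),
      Function.Injective r → Function.Injective c →
      IsUnit (A.submatrix r c).det)
    (x : Fin n → ℚ) (hx : x ≠ 0) :
    (Finset.univ.filter fun r : Fin m => A.mulVec x r = 0).card
      < (Finset.univ.filter fun i : Fin n => x i ≠ 0).card := by
  set S := Finset.univ.filter fun i : Fin n => x i ≠ 0 with hS
  set Z := Finset.univ.filter fun r : Fin m => A.mulVec x r = 0 with hZ
  by_contra hcon
  push_neg at hcon
  set k := S.card with hk
  have hk1 : 1 ≤ k := by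
    obtain ⟨i, hi⟩ := Function.ne_iff.mp hx
    have hi' : x i ≠ 0 := by simpa using hi
    exact Finset.card_pos.mpr ⟨i, by simp [hS, hi']⟩
  obtain ⟨T, hTZ, hT⟩ := Finset.exists_subset_card_eq hcon
  have eS := S.orderIsoOfFin hk.symm
  have eT := T.orderIsoOfFin hT
  set r : Fin k → Fin m := fun i => (eT i : Fin m) with hr
  set c : Fin k → Fin n := fun i => (eS i : Fin n) with hc
  have hrinj : Function.Injective r := fun a b hab => eT.injective (Subtype.ext hab)
  have hcinj : Function.Injective c := fun a b hab => eS.injective (Subtype.ext hab)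
  have hu : IsUnit (A.submatrix r c).det := hsub k hk1 r c hrinj hcinj
  set y : Fin k → ℚ := fun l => x (c l) with hy
  have hmv : (A.submatrix r c).mulVec y = 0 := by
    funext i
    have h1 : (A.submatrix r c).mulVec y i = ∑ l : Fin k, A (r i) (c l) * x (c l) := by
      simp [Matrix.mulVec, dotProduct, hy]
    have h2 : ∑ l : Fin k, A (r i) (c l) * x (c l)
        = ∑ p ∈ S, A (r i) p * x p := by
      rw [← Finset.sum_coe_sort S (fun p => A (r i) p * x p)]
      exact Equiv.sum_comp eS.toEquiv (fun s : S => A (r i) s * x s)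
    have h3 : ∑ p ∈ S, A (r i) p * x p = ∑ p : Fin n, A (r i) p * x p := by
      refine Finset.sum_subset (Finset.subset_univ S) fun p _ hp => ?_
      have : x p = 0 := by
        by_contra hxp
        exact hp (by simp [hS, hxp])
      simp [this]
    have h4 : A.mulVec x (r i) = 0 := by
      have : r i ∈ Z := hTZ (eT i).2
      simpa [hZ] using this
    have h5 : ∑ p : Fin n, A (r i) p * x p = A.mulVec x (r i) := by
      simp [Matrix.mulVec, dotProduct]
    simp [h1, h2, h3, h5, h4]
  have hy0 : y = 0 := by
    have hinj := Matrix.mulVec_injective_iff_isUnit (A := A.submatrix r c) |>.mpr ((Matrix.isUnit_iff_isUnit_det _).mpr hu)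
    apply hinj
    simp [hmv]
  have h7 := (eS ⟨0, hk1⟩).2
  exact (Finset.mem_filter.mp h7).2 (congrFun hy0 ⟨0, hk1⟩)

/-- If every square submatrix of the m×n rational matrix `A` (with m ≥ n) is
nonsingular, then the matrix `B` obtained by stacking the n×n identity matrix
on top of `A` is optimally sparse: `nnz (B * X) ≥ nnz B = n * (m + 1)`
for every invertible `X`. -/
theorem stacked_identity_optimally_sparse (m n : ℕ) (hmn : n ≤ m)
    (A : Matrix (Fin m) (Fin n) ℚ)
    (hsub : ∀ k : ℕ, 1 ≤ k → ∀ (r : Fin k → Fin m) (c : Fin k → Fin n),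
      Function.Injective r → Function.Injective c →
      IsUnit (A.submatrix r c).det)
    (B : Matrix (Fin n ⊕ Fin m) (Fin n) ℚ)
    (hB : B = Matrix.fromRows (1 : Matrix (Fin n) (Fin n) ℚ) A) :
    nnz B = n * (m + 1) ∧
      ∀ X : Matrix (Fin n) (Fin n) ℚ, IsUnit X.det → nnz B ≤ nnz (B * X) := by
  have hAne : ∀ (i : Fin m) (j : Fin n), A i j ≠ 0 := by
    intro i j
    have := hsub 1 le_rfl (fun _ => i) (fun _ => j)
      (Function.injective_of_subsingleton _) (Function.injective_of_subsingleton _)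
    rw [Matrix.det_fin_one] at this
    exact this.ne_zero
  -- card splitting over sum type
  have hsplit : ∀ (M : Matrix (Fin n ⊕ Fin m) (Fin n) ℚ) (j : Fin n),
      (Finset.univ.filter fun i : Fin n ⊕ Fin m => M i j ≠ 0).card
        = (Finset.univ.filter fun i : Fin n => M (Sum.inl i) j ≠ 0).card
          + (Finset.univ.filter fun i : Fin m => M (Sum.inr i) j ≠ 0).card := by
    intro M j
    rw [Finset.card_filter, Fintype.sum_sum_type, Finset.card_filter, Finset.card_filter]
  have hB1 : nnz B = n * (m + 1) := by
    rw [nnz_eq_sum]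
    have : ∀ j : Fin n,
        (Finset.univ.filter fun i : Fin n ⊕ Fin m => B i j ≠ 0).card = m + 1 := by
      intro j
      rw [hsplit]
      have htop : (Finset.univ.filter fun i : Fin n => B (Sum.inl i) j ≠ 0) = {j} := by
        ext i
        by_cases h : i = j <;> simp [hB, Matrix.one_apply, h]
      have hbot : (Finset.univ.filter fun i : Fin m => B (Sum.inr i) j ≠ 0)
          = Finset.univ := by
        ext i
        simp [hB, hAne i j]
      rw [htop, hbot]
      simp [Nat.add_comm]
    rw [Finset.sum_congr rfl fun j _ => this j]
    simp [Nat.mul_comm]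
  refine ⟨hB1, fun X hX => ?_⟩
  rw [hB1, nnz_eq_sum]
  have hcol : ∀ j : Fin n,
      m + 1 ≤ (Finset.univ.filter fun i : Fin n ⊕ Fin m => (B * X) i j ≠ 0).card := by
    intro j
    set x : Fin n → ℚ := fun i => X i j with hxdef
    have hxne : x ≠ 0 := by
      intro h0
      have : X.det = 0 := Matrix.det_eq_zero_of_column_eq_zero j
        (fun i => congrFun h0 i)
      rw [this] at hX
      exact (not_isUnit_zero hX)
    have hBX : B * X = Matrix.fromRows (1 * X) (A * X) := by
      rw [hB, Matrix.fromRows_mul]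
    have htop : (Finset.univ.filter fun i : Fin n => (B * X) (Sum.inl i) j ≠ 0)
        = (Finset.univ.filter fun i : Fin n => x i ≠ 0) := by
      ext i
      simp [hBX, hxdef]
    have hbotval : ∀ i : Fin m, (B * X) (Sum.inr i) j = A.mulVec x i := by
      intro i
      simp [hBX, hB, Matrix.mul_apply, Matrix.mulVec, dotProduct, hxdef]
    rw [hsplit, htop]
    set S := Finset.univ.filter fun i : Fin n => x i ≠ 0 with hSdef
    set Z := Finset.univ.filter fun i : Fin m => A.mulVec x i = 0 with hZdef
    set W := Finset.univ.filter fun i : Fin m => (B * X) (Sum.inr i) j ≠ 0 with hWdef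
    have hZS : Z.card < S.card := zeros_lt m n A hsub x hxne
    have hbot : W.card + Z.card = m := by
      rw [hWdef]
      have h1 : (Finset.univ.filter fun i : Fin m => (B * X) (Sum.inr i) j ≠ 0)
          = (Finset.univ.filter fun i : Fin m => ¬ (A.mulVec x i = 0)) := by
        ext i
        simp [hbotval i]
      have h2 : Z.card + (Finset.univ.filter fun i : Fin m => ¬ (A.mulVec x i = 0)).card
          = m := by
        rw [hZdef, Finset.card_filter_add_card_filter_not]
        simp
      rw [h1]
      omega
    omega
  calc n * (m + 1) = ∑ _j : Fin n, (m + 1) := by simp [Nat.mul_comm]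
    _ ≤ _ := Finset.sum_le_sum fun j _ => hcol j
end

section
/- Let A be a full-rank m×n matrix over ℚ (its n columns a₁,…,aₙ are linearly independent), written A = (C | B) where B consists of a contiguous set of right-most columns of A and C is nonempty. For j ∈ {1,…,n}, let A∖j denote A with its j-th column removed. Then the set {v ∈ col(A) : v ∉ col(B)} is nonempty, and min{ ||v||₀ : v ∈ col(A), v ∉ col(B) } = min over all indices j with a_j ∉ col(B) of ( min over x ∈ ℚ^{n−1} of ||a_j − (A∖j)x||₀ ). -/
/-- Number of nonzero entries of a vector (the ℓ₀ quasi-norm). -/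
def l0 {m : ℕ} (x : Fin m → ℚ) : ℕ :=
  Finset.card (Finset.univ.filter fun i => x i ≠ 0)

namespace SparseAux

lemma l0_smul {m : ℕ} (c : ℚ) (hc : c ≠ 0) (v : Fin m → ℚ) : l0 (c • v) = l0 v := by
  unfold l0
  congr 1
  ext i
  simp [hc]

variable {m k b : ℕ} (A : Matrix (Fin m) (Fin (k + b)) ℚ)

/-- extend a vector on the B-indices by zero -/
def extB (y : Fin b → ℚ) : Fin (k + b) → ℚ :=
  fun j => if h : k ≤ j.val then y ⟨j.val - k, by omega⟩ else 0

lemma extB_mulVec (y : Fin b → ℚ) :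
    (A.submatrix id (Fin.natAdd k)).mulVec y = A.mulVec (extB y) := by
  funext i
  simp only [Matrix.mulVec, dotProduct, Matrix.submatrix_apply, id]
  rw [Fin.sum_univ_add (f := fun j => A i j * extB y j)]
  have h1 : ∀ j : Fin k, extB (k := k) y (Fin.castAdd b j) = 0 := by
    intro j
    have : ¬ k ≤ (Fin.castAdd b j).val := by simp
    simp [extB, this]
  have h2 : ∀ j : Fin b, extB (k := k) y (Fin.natAdd k j) = y j := by
    intro j
    have : k ≤ (Fin.natAdd k j).val := by simp
    simp only [extB, this, dif_pos]
    congr 1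
    ext
    simp
  simp [h1, h2]

/-- extend a vector on the indices ≠ j by zero -/
def extj {n : ℕ} (j : Fin n) (x : {j' : Fin n // j' ≠ j} → ℚ) : Fin n → ℚ :=
  fun j' => if h : j' = j then 0 else x ⟨j', h⟩

lemma extj_mulVec (j : Fin (k + b)) (x : {j' : Fin (k + b) // j' ≠ j} → ℚ) :
    (A.submatrix id (Subtype.val : {j' : Fin (k + b) // j' ≠ j} → Fin (k + b))).mulVec x
      = A.mulVec (extj j x) := by
  funext i
  simp only [Matrix.mulVec, dotProduct, Matrix.submatrix_apply, id]
  rw [← Finset.sum_erase (Finset.univ) (f := fun j' => A i j' * extj j x j')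
        (a := j) (by simp [extj])]
  rw [Finset.sum_subtype (p := fun j' => j' ≠ j) (Finset.univ.erase j) (by simp)]
  apply Finset.sum_congr rfl
  intro s _
  simp [extj, s.prop]

lemma mulVec_eq_sum_cols (w : Fin (k + b) → ℚ) :
    A.mulVec w = ∑ j, w j • (fun i => A i j) := by
  funext i
  simp [Matrix.mulVec, dotProduct, Finset.sum_apply, mul_comm]

lemma col_eq (j : Fin (k + b)) : A.mulVec (Pi.single j 1) = fun i => A i j := by
  rw [Matrix.mulVec_single]
  funext i
  exact mul_one _

lemma inj_of_rank (hrank : A.rank = k + b) : Function.Injective A.mulVec := by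
  have : Function.Injective A.mulVecLin := by
    rw [← LinearMap.ker_eq_bot, ← Submodule.finrank_eq_zero]
    have h := LinearMap.finrank_range_add_finrank_ker A.mulVecLin
    rw [Matrix.rank] at hrank
    simp [Module.finrank_pi] at h
    omega
  exact this

lemma mem_colB_iff (v : Fin m → ℚ) :
    v ∈ Set.range (A.submatrix id (Fin.natAdd k)).mulVec ↔
      ∃ w, (∀ j : Fin (k + b), j.val < k → w j = 0) ∧ A.mulVec w = v := by
  constructor
  · rintro ⟨y, rfl⟩
    refine ⟨extB y, fun j hj => ?_, (extB_mulVec A y).symm⟩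
    simp only [extB]
    rw [dif_neg (by omega)]
  · rintro ⟨w, hw0, rfl⟩
    refine ⟨fun i => w (Fin.natAdd k i), ?_⟩
    rw [extB_mulVec]
    refine congrArg A.mulVec (funext fun j => ?_)
    by_cases h : k ≤ j.val
    · have hje : Fin.natAdd k (⟨j.val - k, by omega⟩ : Fin b) = j :=
        Fin.ext (show k + (j.val - k) = j.val by omega)
      simp only [extB, h, dif_pos, hje]
    · simp only [extB]
      rw [dif_neg h]
      exact (hw0 j (by omega)).symm

lemma sum_mem_colB (w : Fin (k + b) → ℚ)
    (hw : ∀ j, w j ≠ 0 → (fun i => A i j) ∈ Set.range (A.submatrix id (Fin.natAdd k)).mulVec) :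
    A.mulVec w ∈ Set.range (A.submatrix id (Fin.natAdd k)).mulVec := by
  set B := A.submatrix id (Fin.natAdd k)
  have hset : Set.range B.mulVec = (LinearMap.range B.mulVecLin : Set (Fin m → ℚ)) := by
    rw [LinearMap.coe_range]
    apply Set.ext
    intro v
    simp [Matrix.mulVecLin_apply]
  rw [hset] at hw ⊢
  rw [mulVec_eq_sum_cols]
  refine Submodule.sum_mem _ (fun j _ => ?_)
  by_cases h : w j = 0
  · simp [h]
  · exact Submodule.smul_mem _ _ (hw j h)

lemma col_not_mem_colB (hrank : A.rank = k + b) (j : Fin (k + b)) (hj : j.val < k) :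
    (fun i => A i j) ∉ Set.range (A.submatrix id (Fin.natAdd k)).mulVec := by
  intro hmem
  obtain ⟨w, hw0, hwv⟩ := (mem_colB_iff A _).1 hmem
  have := inj_of_rank A hrank (hwv.trans (col_eq A j).symm)
  have h1 := congrFun this j
  rw [hw0 j hj, Pi.single_eq_same] at h1
  exact one_ne_zero h1.symm

lemma col_mem_colB (j : Fin (k + b)) (hj : k ≤ j.val) :
    (fun i => A i j) ∈ Set.range (A.submatrix id (Fin.natAdd k)).mulVec := by
  refine (mem_colB_iff A _).2 ⟨Pi.single j 1, fun j' hj' => ?_, col_eq A j⟩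
  exact Pi.single_eq_of_ne (by rintro rfl; omega) 1

end SparseAux

open SparseAux in
/-- Let `A` be a full-rank m×(k+b) matrix written `A = (C | B)` where `B`
consists of the `b` right-most columns and `C` is nonempty (`k ≥ 1`). Then
the set of vectors in `col A` but not in `col B` is nonempty, and the
sparsest such vector is obtained as the sparsest vector of the form
`a_j - (A∖j) x` over all columns `a_j ∉ col B`, where `A∖j` is `A` with its
`j`-th column removed. -/
theorem sparsest_independent_vector_via_min_unsatisfy (m k b : ℕ) (hk : 1 ≤ k)
    (A : Matrix (Fin m) (Fin (k + b)) ℚ) (hrank : A.rank = k + b) :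
    ({v : Fin m → ℚ | v ∈ Set.range A.mulVec ∧
        v ∉ Set.range (A.submatrix id (Fin.natAdd k)).mulVec}.Nonempty) ∧
      sInf {t : ℕ | ∃ v : Fin m → ℚ, v ∈ Set.range A.mulVec ∧
          v ∉ Set.range (A.submatrix id (Fin.natAdd k)).mulVec ∧ l0 v = t} =
        sInf {t : ℕ | ∃ j : Fin (k + b),
          (fun i => A i j) ∉ Set.range (A.submatrix id (Fin.natAdd k)).mulVec ∧
          ∃ x : {j' : Fin (k + b) // j' ≠ j} → ℚ,
            l0 ((fun i => A i j) -
              (A.submatrix id (Subtype.val : {j' : Fin (k + b) // j' ≠ j} → Fin (k + b))).mulVec x) = t} := by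
  have hinj := inj_of_rank A hrank
  constructor
  · refine ⟨fun i => A i ⟨0, by omega⟩, ⟨Pi.single _ 1, col_eq A _⟩,
      col_not_mem_colB A hrank ⟨0, by omega⟩ ?_⟩
    exact hk
  · congr 1
    ext t
    constructor
    · rintro ⟨v, ⟨w, rfl⟩, hvB, rfl⟩
      have hex : ∃ j, w j ≠ 0 ∧
          (fun i => A i j) ∉ Set.range (A.submatrix id (Fin.natAdd k)).mulVec := by
        by_contra h
        push_neg at h
        exact hvB (sum_mem_colB A w h)
      obtain ⟨j, hwj, hjB⟩ := hex
      refine ⟨j, hjB, fun s => -(w s.1 / w j), ?_⟩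
      have heq : (fun i => A i j) -
          (A.submatrix id (Subtype.val : {j' : Fin (k + b) // j' ≠ j} → Fin (k + b))).mulVec
            (fun s => -(w s.1 / w j)) = (w j)⁻¹ • A.mulVec w := by
        rw [extj_mulVec, ← col_eq A j, ← Matrix.mulVec_sub, ← Matrix.mulVec_smul]
        refine congrArg A.mulVec (funext fun j' => ?_)
        by_cases h : j' = j
        · subst h
          simp [extj, Pi.single_eq_same, inv_mul_cancel₀ hwj]
        · simp [extj, h, Pi.single_eq_of_ne h, div_eq_inv_mul]
      rw [heq, l0_smul _ (inv_ne_zero hwj)]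
    · rintro ⟨j, hjB, x, rfl⟩
      refine ⟨_, ⟨Pi.single j 1 - extj j x, ?_⟩, ?_, rfl⟩
      · rw [Matrix.mulVec_sub, col_eq, extj_mulVec]
      · intro hv
        obtain ⟨w, hw0, hwv⟩ := (mem_colB_iff A _).1 hv
        by_cases hj : j.val < k
        · have haj : A.mulVec (w + extj j x) = A.mulVec (Pi.single j 1) := by
            rw [Matrix.mulVec_add, hwv, ← extj_mulVec, col_eq, sub_add_cancel]
          have h1 := congrFun (hinj haj) j
          simp [extj, hw0 j hj] at h1
        · exact hjB (col_mem_colB A j (by omega))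
end
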